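/- In any algebra (S,*,') satisfying the three axioms, the identity (x * y') * y = x * (y' * y) holds for all x, y in S. -/
import Mathlib


theorem stmt (S : Type*) (m : S → S → S) (i : S → S)
    (E1 : ∀ x, m (m x (i x)) x = x)
    (E2 : ∀ x y, m (m x (i x)) (m (i y) y) = m (m (i y) y) (m x (i x)))
    (E3 : ∀ x y z, m (m x y) z = m x (m y (i (i z)))) :
    ∀ x y, m (m x (i y)) y = m x (m (i y) y) := by
  -- L1 : x (x' x'') = x
  have L1 : ∀ x, m x (m (i x) (i (i x))) = x := fun x => (E3 x (i x) x).symm.trans (E1 x)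
  -- L2 : x ((x' x'') y'') = x y
  have L2 : ∀ x y, m x (m (m (i x) (i (i x))) (i (i y))) = m x y := by
    intro x y
    have h := E3 x (m (i x) (i (i x))) y
    rw [L1 x] at h
    exact h.symm
  -- L3 : x' x'' = x' x
  have L3 : ∀ x, m (i x) (i (i x)) = m (i x) x := by
    intro x
    have h := L2 (i x) x
    rw [E1 (i (i x))] at h
    exact h
  intro x y
  rw [E3 x (i y) y, L3 y]
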